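/- Let d ≥ 1 be an integer, let m : ℝ^d → ℝ be Lipschitz with constant L and satisfy 0 < c₀ ≤ m(x) ≤ C₀ for all x ∈ ℝ^d, let K : ℝ → ℝ be a continuous function with support contained in [−1,1], set K_d(u) := ∏_{j=1}^d K(u_j), and assume κ := ∫_{ℝ^d} K_d(u)² du > 0. For x ∈ ℝ^d and h > 0 define A(x,h) := ∫_{ℝ^d} m(x + h·u)·K_d(u)² du. Then there exists a constant C' (depending only on d, L, c₀, C₀, and K) such that for every x ∈ ℝ^d and every h ∈ (0,1], ∫_{ℝ^d} ( A(x,h)^{−1/2} − (κ·m(x + h·t))^{−1/2} )² · m(x + h·t) · K_d(t)² dt ≤ C'·h². -/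

import Mathlib

open MeasureTheory

lemma inv_sqrt_diff_sq_le {a b p : ℝ} (hp : 0 < p) (ha : p ≤ a) (hb : p ≤ b) :
    ((Real.sqrt a)⁻¹ - (Real.sqrt b)⁻¹) ^ 2 ≤ (a - b) ^ 2 / (4 * p ^ 3) := by
  have hap : 0 < a := hp.trans_le ha
  have hbp : 0 < b := hp.trans_le hb
  have hsa : 0 < Real.sqrt a := Real.sqrt_pos.2 hap
  have hsb : 0 < Real.sqrt b := Real.sqrt_pos.2 hbp
  have hsp : 0 < Real.sqrt p := Real.sqrt_pos.2 hp
  have hsa2 : Real.sqrt a ^ 2 = a := Real.sq_sqrt hap.le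
  have hsb2 : Real.sqrt b ^ 2 = b := Real.sq_sqrt hbp.le
  have hsp2 : Real.sqrt p ^ 2 = p := Real.sq_sqrt hp.le
  set sa := Real.sqrt a
  set sb := Real.sqrt b
  set sp := Real.sqrt p
  have hpa : sp ≤ sa := Real.sqrt_le_sqrt ha
  have hpb : sp ≤ sb := Real.sqrt_le_sqrt hb
  have hD : 0 < sa * sb * (sa + sb) := by positivity
  have hident : sa⁻¹ - sb⁻¹ = (b - a) / (sa * sb * (sa + sb)) := by
    rw [← hsa2, ← hsb2]
    field_simp
    ring
  rw [hident, div_pow]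
  have h1 : (b - a) ^ 2 = (a - b) ^ 2 := by ring
  rw [h1]
  apply div_le_div_of_nonneg_left (by positivity) (by positivity)
  have e3 : 2 * sp ^ 3 ≤ sa * sb * (sa + sb) := by nlinarith
  calc 4 * p ^ 3 = (2 * sp ^ 3) ^ 2 := by rw [← hsp2]; ring
    _ ≤ (sa * sb * (sa + sb)) ^ 2 := pow_le_pow_left₀ (by positivity) e3 2

theorem variance_standardization_bias_bound
    (d : ℕ) (hd : 1 ≤ d)
    (m : (Fin d → ℝ) → ℝ) (L : NNReal) (hL : LipschitzWith L m)
    (c₀ C₀ : ℝ) (hc₀ : 0 < c₀) (hm : ∀ x, c₀ ≤ m x ∧ m x ≤ C₀)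
    (K : ℝ → ℝ) (hK : Continuous K)
    (hKsupp : Function.support K ⊆ Set.Icc (-1 : ℝ) 1)
    (Kd : (Fin d → ℝ) → ℝ) (hKd : Kd = fun u => ∏ j, K (u j))
    (κ : ℝ) (hκ : κ = ∫ u : Fin d → ℝ, (Kd u) ^ 2) (hκpos : 0 < κ)
    (A : (Fin d → ℝ) → ℝ → ℝ)
    (hA : A = fun x h => ∫ u : Fin d → ℝ, m (x + h • u) * (Kd u) ^ 2) :
    ∃ C' : ℝ, ∀ (x : Fin d → ℝ) (h : ℝ), 0 < h → h ≤ 1 →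
      (∫ t : Fin d → ℝ,
        ((A x h) ^ (-(1 : ℝ) / 2) - (κ * m (x + h • t)) ^ (-(1 : ℝ) / 2)) ^ 2
          * m (x + h • t) * (Kd t) ^ 2)
        ≤ C' * h ^ 2 := by
  have hC₀ : 0 < C₀ := lt_of_lt_of_le hc₀ ((hm 0).1.trans (hm 0).2)
  -- continuity of Kd
  have hKdc : Continuous Kd := by
    rw [hKd]
    exact continuous_finset_prod _ fun j _ => hK.comp (continuous_apply j)
  have hmc : Continuous m := hL.continuous
  -- support of Kd
  have hKdsupp : Function.support Kd ⊆ Set.pi Set.univ (fun _ : Fin d => Set.Icc (-1 : ℝ) 1) := by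
    intro u hu
    rw [hKd] at hu
    intro j _
    apply hKsupp
    intro hj
    exact hu (Finset.prod_eq_zero (Finset.mem_univ j) hj)
  have hcompact : IsCompact (Set.pi Set.univ (fun _ : Fin d => Set.Icc (-1 : ℝ) 1)) :=
    isCompact_univ_pi fun _ => isCompact_Icc
  have hKdCS : HasCompactSupport Kd :=
    HasCompactSupport.intro hcompact fun u hu => by
      by_contra hne; exact hu (hKdsupp hne)
  have hKd2CS : HasCompactSupport (fun u => Kd u ^ 2) := by
    apply HasCompactSupport.intro hcompact
    intro u hu
    have : Kd u = 0 := by by_contra hne; exact hu (hKdsupp hne)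
    simp [this]
  -- Integrability of Kd^2
  have intKd2 : Integrable (fun u : Fin d → ℝ => Kd u ^ 2) :=
    (hKdc.pow 2).integrable_of_hasCompactSupport hKd2CS
  -- integrability of m(x+h•u)*Kd²
  have int_m : ∀ (x : Fin d → ℝ) (h : ℝ),
      Integrable (fun u : Fin d → ℝ => m (x + h • u) * Kd u ^ 2) := by
    intro x h
    apply Continuous.integrable_of_hasCompactSupport
    · exact (hmc.comp (continuous_const.add (continuous_id.const_smul h))).mul
        (hKdc.pow 2)
    · apply HasCompactSupport.intro hcompact
      intro u hu
      have : Kd u = 0 := by by_contra hne; exact hu (hKdsupp hne)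
      simp [this]
  -- lower bound for A
  have hAlb : ∀ (x : Fin d → ℝ) (h : ℝ), κ * c₀ ≤ A x h := by
    intro x h
    rw [hA, hκ]
    have : (∫ u : Fin d → ℝ, Kd u ^ 2) * c₀ = ∫ u : Fin d → ℝ, c₀ * Kd u ^ 2 := by
      rw [integral_const_mul]; ring
    rw [this]
    apply integral_mono (intKd2.const_mul c₀) (int_m x h)
    intro u
    exact mul_le_mul_of_nonneg_right (hm _).1 (sq_nonneg _)
  have hApos : ∀ (x : Fin d → ℝ) (h : ℝ), 0 < A x h := fun x h =>
    lt_of_lt_of_le (by positivity) (hAlb x h)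
  -- the key pointwise difference bound
  have hdiff : ∀ (x : Fin d → ℝ) (h : ℝ), 0 < h → h ≤ 1 → ∀ t : Fin d → ℝ, Kd t ≠ 0 →
      |A x h - κ * m (x + h • t)| ≤ 2 * (L : ℝ) * h * κ := by
    intro x h hh hh1 t ht
    have htmem : ∀ j, t j ∈ Set.Icc (-1 : ℝ) 1 := fun j => hKdsupp ht j (Set.mem_univ j)
    have hrepr : A x h - κ * m (x + h • t)
        = ∫ u : Fin d → ℝ, (m (x + h • u) - m (x + h • t)) * Kd u ^ 2 := by
      rw [hA, hκ]
      simp only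
      calc (∫ u : Fin d → ℝ, m (x + h • u) * Kd u ^ 2)
            - (∫ u : Fin d → ℝ, Kd u ^ 2) * m (x + h • t)
          = (∫ u : Fin d → ℝ, m (x + h • u) * Kd u ^ 2)
            - ∫ u : Fin d → ℝ, m (x + h • t) * Kd u ^ 2 := by
            rw [integral_const_mul, mul_comm]
        _ = ∫ u : Fin d → ℝ,
            (m (x + h • u) * Kd u ^ 2 - m (x + h • t) * Kd u ^ 2) :=
            (integral_sub (int_m x h) (intKd2.const_mul _)).symm
        _ = ∫ u : Fin d → ℝ, (m (x + h • u) - m (x + h • t)) * Kd u ^ 2 := by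
            congr 1; ext u; ring
    rw [hrepr]
    have hbound : ∀ u : Fin d → ℝ,
        ‖(m (x + h • u) - m (x + h • t)) * Kd u ^ 2‖ ≤ (2 * (L : ℝ) * h) * Kd u ^ 2 := by
      intro u
      by_cases hu : Kd u = 0
      · simp [hu]
      · have humem : ∀ j, u j ∈ Set.Icc (-1 : ℝ) 1 := fun j => hKdsupp hu j (Set.mem_univ j)
        have hdist : dist (x + h • u) (x + h • t) ≤ h * 2 := by
          rw [dist_eq_norm]
          have : (x + h • u) - (x + h • t) = h • (u - t) := by
            ext j; simp [smul_sub]; ring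
          rw [this, norm_smul]
          have hn : ‖u - t‖ ≤ 2 := by
            rw [pi_norm_le_iff_of_nonneg (by norm_num)]
            intro j
            have h1 := humem j
            have h2 := htmem j
            rw [Real.norm_eq_abs, abs_le]
            constructor
            · simp only [Pi.sub_apply]; linarith [h1.1, h1.2, h2.1, h2.2]
            · simp only [Pi.sub_apply]; linarith [h1.1, h1.2, h2.1, h2.2]
          calc ‖h‖ * ‖u - t‖ ≤ ‖h‖ * 2 := by
                exact mul_le_mul_of_nonneg_left hn (norm_nonneg _)
            _ = h * 2 := by rw [Real.norm_eq_abs, abs_of_pos hh]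
        have hlip : |m (x + h • u) - m (x + h • t)| ≤ (L : ℝ) * (h * 2) := by
          have := hL.dist_le_mul (x + h • u) (x + h • t)
          rw [Real.dist_eq] at this
          exact this.trans (mul_le_mul_of_nonneg_left hdist L.2)
        rw [norm_mul, Real.norm_eq_abs, Real.norm_eq_abs, abs_of_nonneg (sq_nonneg (Kd u))]
        apply mul_le_mul_of_nonneg_right _ (sq_nonneg _)
        calc |m (x + h • u) - m (x + h • t)| ≤ (L : ℝ) * (h * 2) := hlip
          _ = 2 * (L : ℝ) * h := by ring
    calc |∫ u : Fin d → ℝ, (m (x + h • u) - m (x + h • t)) * Kd u ^ 2|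
        ≤ ∫ u : Fin d → ℝ, (2 * (L : ℝ) * h) * Kd u ^ 2 := by
          rw [← Real.norm_eq_abs]
          exact norm_integral_le_of_norm_le (intKd2.const_mul _)
            (Filter.Eventually.of_forall hbound)
      _ = (2 * (L : ℝ) * h) * κ := by rw [integral_const_mul, ← hκ]
      _ = 2 * (L : ℝ) * h * κ := by ring
  -- the constant
  refine ⟨(L : ℝ) ^ 2 * C₀ / c₀ ^ 3, ?_⟩
  intro x h hh hh1
  set B : ℝ := (L : ℝ) ^ 2 * C₀ / (κ * c₀ ^ 3) with hB
  have hBnn : 0 ≤ B := by positivity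
  -- pointwise bound of the integrand
  have hpoint : ∀ t : Fin d → ℝ,
      ((A x h) ^ (-(1 : ℝ) / 2) - (κ * m (x + h • t)) ^ (-(1 : ℝ) / 2)) ^ 2
        * m (x + h • t) * (Kd t) ^ 2 ≤ (B * h ^ 2) * Kd t ^ 2 := by
    intro t
    by_cases ht : Kd t = 0
    · rw [ht]; simp
    · have hmt : c₀ ≤ m (x + h • t) := (hm _).1
      have hmtC : m (x + h • t) ≤ C₀ := (hm _).2
      have hmtpos : 0 < m (x + h • t) := hc₀.trans_le hmt
      have hp : (0 : ℝ) < κ * c₀ := by positivity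
      have ha : κ * c₀ ≤ A x h := hAlb x h
      have hb : κ * c₀ ≤ κ * m (x + h • t) :=
        mul_le_mul_of_nonneg_left hmt hκpos.le
      have hrpow : ∀ y : ℝ, 0 < y → y ^ (-(1 : ℝ) / 2) = (Real.sqrt y)⁻¹ := by
        intro y hy
        rw [neg_div, Real.rpow_neg hy.le, Real.sqrt_eq_rpow]
      rw [hrpow _ (hApos x h), hrpow _ (by positivity)]
      have hkey := inv_sqrt_diff_sq_le hp ha hb
      have hd2 : (A x h - κ * m (x + h • t)) ^ 2 ≤ (2 * (L : ℝ) * h * κ) ^ 2 := by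
        rw [← sq_abs]
        apply pow_le_pow_left₀ (abs_nonneg _) (hdiff x h hh hh1 t ht)
      have hsq : ((Real.sqrt (A x h))⁻¹ - (Real.sqrt (κ * m (x + h • t)))⁻¹) ^ 2
          ≤ (2 * (L : ℝ) * h * κ) ^ 2 / (4 * (κ * c₀) ^ 3) := by
        apply hkey.trans
        apply div_le_div_of_nonneg_right hd2 (by positivity)
      have hval : (2 * (L : ℝ) * h * κ) ^ 2 / (4 * (κ * c₀) ^ 3) * C₀
          = B * h ^ 2 := by
        rw [hB]; field_simp; ring
      calc ((Real.sqrt (A x h))⁻¹ - (Real.sqrt (κ * m (x + h • t)))⁻¹) ^ 2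
            * m (x + h • t) * (Kd t) ^ 2
          ≤ ((2 * (L : ℝ) * h * κ) ^ 2 / (4 * (κ * c₀) ^ 3)) * C₀ * Kd t ^ 2 := by
            apply mul_le_mul_of_nonneg_right _ (sq_nonneg _)
            apply mul_le_mul hsq hmtC hmtpos.le (by positivity)
        _ = (B * h ^ 2) * Kd t ^ 2 := by rw [hval]
  -- integrability of the integrand
  have hint : Integrable (fun t : Fin d → ℝ =>
      ((A x h) ^ (-(1 : ℝ) / 2) - (κ * m (x + h • t)) ^ (-(1 : ℝ) / 2)) ^ 2
        * m (x + h • t) * (Kd t) ^ 2) := by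
    apply Continuous.integrable_of_hasCompactSupport
    · have hc1 : Continuous fun t : Fin d → ℝ => m (x + h • t) :=
        hmc.comp (continuous_const.add (continuous_id.const_smul h))
      have hc2 : Continuous fun t : Fin d → ℝ => (κ * m (x + h • t)) ^ (-(1 : ℝ) / 2) := by
        apply Continuous.rpow_const (continuous_const.mul hc1)
        intro t
        left
        exact (mul_pos hκpos (hc₀.trans_le (hm (x + h • t)).1)).ne'
      exact (((continuous_const.sub hc2).pow 2).mul hc1).mul (hKdc.pow 2)
    · apply HasCompactSupport.intro hcompact
      intro u hu
      have : Kd u = 0 := by by_contra hne; exact hu (hKdsupp hne)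
      simp [this]
  calc (∫ t : Fin d → ℝ,
        ((A x h) ^ (-(1 : ℝ) / 2) - (κ * m (x + h • t)) ^ (-(1 : ℝ) / 2)) ^ 2
          * m (x + h • t) * (Kd t) ^ 2)
      ≤ ∫ t : Fin d → ℝ, (B * h ^ 2) * Kd t ^ 2 :=
        integral_mono hint (intKd2.const_mul _) hpoint
    _ = (B * h ^ 2) * κ := by rw [integral_const_mul, ← hκ]
    _ = (L : ℝ) ^ 2 * C₀ / c₀ ^ 3 * h ^ 2 := by
        rw [hB]; field_simp
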